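/- Theorem (alignment equivalence for linear GraphSAGE over mashed ego-graphs): Let P^(0) be the initial embedding matrix of a mashed ego-graph constructed under any alignment G, and let the final center-node embedding be p_0^(K) = (A^K P^(0) W)_0 for a K-layer linear GraphSAGE with reparameterized weight W and aggregation matrix A of the fixed-shape ego-graph. Then p_0^(K) = (Σ_{j=0}^K α_j · Sum_j) W, where Sum_j is the (alignment-independent) sum of batch embeddings in layer j and α_j depends only on K and n. Consequently the final embedding of the center node is the same for any two alignments A and B. -/

import Mathlib

/-- alignment equivalence for linear GraphSAGE over mashed
ego-graphs: if (i) the sum of initial embeddings over every layer group equals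
an alignment-independent `Sum j`, and (ii) the center row of `A^K` is constant
`α j` on each layer `j`, then the final center-node embedding
`(A^K * P0 * W) 0` equals `(∑_j α_j • Sum_j) W`, hence is the same for any
alignment. -/
theorem linear_graphsage_alignment_equivalence
    {N d d' K : ℕ} [NeZero N]
    (A : Matrix (Fin N) (Fin N) ℝ)
    (P0 : Matrix (Fin N) (Fin d) ℝ)
    (W : Matrix (Fin d) (Fin d') ℝ)
    (layer : Fin N → ℕ)
    (hlayer : ∀ i, layer i ≤ K)
    (Sum : ℕ → Fin d → ℝ)
    (hsum : ∀ j, ∑ i ∈ Finset.univ.filter (fun i => layer i = j), P0 i = Sum j)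
    (α : ℕ → ℝ)
    (hα : ∀ i : Fin N, (A ^ K) 0 i = α (layer i)) :
    ∀ c : Fin d',
      (A ^ K * P0 * W) 0 c
        = ∑ k : Fin d, (∑ j ∈ Finset.range (K + 1), α j * Sum j k) * W k c := by
  intro c
  have key : ∀ k : Fin d, (A ^ K * P0) 0 k
      = ∑ j ∈ Finset.range (K + 1), α j * Sum j k := by
    intro k
    have h1 : (A ^ K * P0) 0 k = ∑ i : Fin N, α (layer i) * P0 i k := by
      simp [Matrix.mul_apply, hα]
    rw [h1]
    rw [← Finset.sum_fiberwise_of_maps_to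
      (g := layer) (t := Finset.range (K + 1))
      (fun i _ => Finset.mem_range.mpr (Nat.lt_succ_of_le (hlayer i)))]
    refine Finset.sum_congr rfl fun j _ => ?_
    have := congrFun (hsum j) k
    replace this : ∑ i ∈ Finset.univ.filter (fun i => layer i = j), P0 i k = Sum j k := by
      rw [← this]; exact (Finset.sum_apply k _ (fun i => P0 i)).symm
    rw [← this, Finset.mul_sum]
    exact Finset.sum_congr rfl fun i hi => by
      rw [(Finset.mem_filter.mp hi).2]
  simp only [Matrix.mul_apply]
  exact Finset.sum_congr rfl fun k _ => by
    rw [show (∑ j, (A ^ K) 0 j * P0 j k) = (A ^ K * P0) 0 k from (Matrix.mul_apply).symm, key k]
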